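/- In the time-dependent variational setting described in the context: for every R ≥ R₀ there exists a constant M_R > 0, depending only on n, the Tonelli constants of L, C_F, R₀, δ₀, c₀, the Lipschitz constant of u^f, and R (in particular independent of T and of the particular coupling c), such that for every starting point x̃ in the closed ball B̄_R and every minimizer ξ* from (0, x̃), the Lebesgue measure of the set {s ∈ [0,T] : ξ*(s) ∈ B̄_R} is at least T − M_R. -/

import Mathlib

noncomputable section

open MeasureTheory Metric Set
open scoped RealInnerProductSpace NNReal

abbrev Euc (n : ℕ) := EuclideanSpace ℝ (Fin n)

/-- A strict Tonelli Lagrangian with constants `C₁ C₂ C₃`: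
(a) uniform convexity/boundedness of the second derivative in `v`;
(b) bound on the mixed second derivative `D²_{vx}L`;
(c) bound at `v = 0`. -/
def IsStrictTonelli {n : ℕ} (L : Euc n → Euc n → ℝ) (C₁ C₂ C₃ : ℝ) : Prop :=
  ContDiff ℝ 2 (Function.uncurry L) ∧
  (∀ x v w : Euc n,
      (1 / C₁) * ‖w‖ ^ 2 ≤ iteratedFDeriv ℝ 2 (L x) v ![w, w] ∧
      iteratedFDeriv ℝ 2 (L x) v ![w, w] ≤ C₁ * ‖w‖ ^ 2) ∧
  (∀ x v : Euc n, ‖fderiv ℝ (fun y => fderiv ℝ (L y) v) x‖ ≤ C₂ * (1 + ‖v‖)) ∧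
  (∀ x : Euc n, |L x 0| + ‖fderiv ℝ (fun y => L y 0) x‖ + ‖fderiv ℝ (L x) 0‖ ≤ C₃)

/-- The action `J_t(ξ) = ∫_t^T (L(ξ(s), ξ'(s)) + c(s, ξ(s))) ds + u^f(ξ(T))` of a
(Lipschitz) curve `ξ`, the derivative being taken almost everywhere. -/
def action {n : ℕ} (L : Euc n → Euc n → ℝ) (c : ℝ → Euc n → ℝ) (uf : Euc n → ℝ)
    (t T : ℝ) (ξ : ℝ → Euc n) : ℝ :=
  (∫ s in t..T, (L (ξ s) (deriv ξ s) + c s (ξ s))) + uf (ξ T)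

/-- `ξ` is a minimizer from `(t,x)`: it is Lipschitz, starts at `x` at time `t`, and its
action on `[t,T]` is no greater than that of any Lipschitz curve starting at `x` at time
`t`. -/
def IsMinimizer {n : ℕ} (L : Euc n → Euc n → ℝ) (c : ℝ → Euc n → ℝ) (uf : Euc n → ℝ)
    (t T : ℝ) (x : Euc n) (ξ : ℝ → Euc n) : Prop :=
  (∃ K : ℝ≥0, LipschitzWith K ξ) ∧ ξ t = x ∧
  ∀ η : ℝ → Euc n, (∃ K : ℝ≥0, LipschitzWith K η) → η t = x →
    action L c uf t T ξ ≤ action L c uf t T η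

/-- The uniform well condition: the point `xT ∈ K₀` minimizes `x ↦ L(x,0) + c(s,x)` over
`K₀` at every time `s ∈ [0,T]`, and beats every point outside `K₀` by at least `δ₀`. -/
def WellCondition {n : ℕ} (L : Euc n → Euc n → ℝ) (c : ℝ → Euc n → ℝ)
    (K₀ : Set (Euc n)) (δ₀ T : ℝ) (xT : Euc n) : Prop :=
  xT ∈ K₀ ∧ ∀ s ∈ Set.Icc (0 : ℝ) T,
    (∀ y ∈ K₀, L xT 0 + c s xT ≤ L y 0 + c s y) ∧
    (∀ y ∉ K₀, L xT 0 + c s xT + δ₀ ≤ L y 0 + c s y)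

/-- excursion time from a compact set: in the time-dependent variational
setting, for every `R ≥ R₀` there is `M_R > 0`, independent of the horizon `T > 1` and of
the coupling `c` (with `|c| ≤ C_F` and satisfying the uniform well condition), such that
every minimizer `ξ*` from `(0, xinit)` with `xinit ∈ B̄_R` spends time at least `T − M_R` in
`B̄_R`. -/

def Csm : ℝ := sSup ((fun s => |deriv Real.smoothTransition s|) '' Set.Icc 0 1)

lemma contDeriv_st : Continuous (deriv Real.smoothTransition) :=
  (Real.smoothTransition.contDiff (n := 2)).continuous_deriv (by norm_num)

lemma bdd_st : BddAbove ((fun s => |deriv Real.smoothTransition s|) '' Set.Icc 0 1) :=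
  (isCompact_Icc.image (continuous_abs.comp contDeriv_st)).bddAbove

lemma st_deriv_le (s : ℝ) (hs : s ∈ Set.Icc (0:ℝ) 1) :
    |deriv Real.smoothTransition s| ≤ Csm :=
  le_csSup bdd_st ⟨s, hs, rfl⟩

lemma Csm_nonneg : 0 ≤ Csm :=
  le_trans (abs_nonneg _) (st_deriv_le 0 (by norm_num))

lemma st_deriv_zero_of_one_le (s : ℝ) (hs : 1 ≤ s) : deriv Real.smoothTransition s = 0 := by
  rcases eq_or_lt_of_le hs with h | h
  · subst h
    apply IsLocalMax.deriv_eq_zero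
    apply Filter.Eventually.of_forall
    intro y
    exact le_of_le_of_eq (Real.smoothTransition.le_one y) Real.smoothTransition.one.symm
  · have hev : Real.smoothTransition =ᶠ[nhds s] fun _ => 1 := by
      filter_upwards [Ioi_mem_nhds h] with y hy
      exact Real.smoothTransition.one_of_one_le (le_of_lt hy)
    rw [hev.deriv_eq, deriv_const]

lemma st_deriv_zero_of_nonpos (s : ℝ) (hs : s < 0) : deriv Real.smoothTransition s = 0 := by
  have hev : Real.smoothTransition =ᶠ[nhds s] fun _ => 0 := by
    filter_upwards [Iio_mem_nhds hs] with y hy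
    exact Real.smoothTransition.zero_of_nonpos (le_of_lt hy)
  rw [hev.deriv_eq, deriv_const]

lemma st_deriv_le' (s : ℝ) : |deriv Real.smoothTransition s| ≤ Csm := by
  rcases lt_or_ge s 0 with h | h
  · rw [st_deriv_zero_of_nonpos s h]; simpa using Csm_nonneg
  rcases le_or_gt s 1 with h1 | h1
  · exact st_deriv_le s ⟨h, h1⟩
  · rw [st_deriv_zero_of_one_le s h1.le]; simpa using Csm_nonneg

-- helper: even convex function on ℝ: value at 0 ≤ value at 1
lemma even_cvx_le {g : ℝ → ℝ} (hcvx : ConvexOn ℝ Set.univ g)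
    (heven : ∀ t : ℝ, g (-t) = g t) : g 0 ≤ g 1 := by
  have h := hcvx.2 (Set.mem_univ (-1 : ℝ)) (Set.mem_univ (1 : ℝ))
    (by norm_num : (0:ℝ) ≤ (1/2 : ℝ)) (by norm_num : (0:ℝ) ≤ (1/2 : ℝ)) (by norm_num)
  simp only [smul_eq_mul] at h
  have : (1/2 : ℝ) * (-1) + (1/2 : ℝ) * 1 = 0 := by norm_num
  rw [this] at h
  have h1 : g (-1) = g 1 := heven 1
  linarith

-- derivative computations along a line
lemma line_deriv {n : ℕ} {f : Euc n → ℝ} (hf : ContDiff ℝ 2 f) (v : Euc n) :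
    (∀ t : ℝ, HasDerivAt (fun t : ℝ => f (t • v)) (fderiv ℝ f (t • v) v) t) ∧
    (∀ t : ℝ, HasDerivAt (fun t : ℝ => fderiv ℝ f (t • v) v)
      (iteratedFDeriv ℝ 2 f (t • v) ![v, v]) t) := by
  have hline : ∀ t : ℝ, HasDerivAt (fun t : ℝ => t • v) v t := by
    intro t
    simpa using (hasDerivAt_id t).smul_const v
  have hdf : Differentiable ℝ f := hf.differentiable (by norm_num)
  constructor
  · intro t
    exact (hdf (t • v)).hasFDerivAt.comp_hasDerivAt t (hline t)
  · intro t
    have hf' : ContDiff ℝ 1 (fderiv ℝ f) := hf.fderiv_right (le_refl _)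
    have h1 : HasDerivAt (fun t : ℝ => fderiv ℝ f (t • v))
        (fderiv ℝ (fderiv ℝ f) (t • v) v) t :=
      ((hf'.differentiable (by norm_num)) (t • v)).hasFDerivAt.comp_hasDerivAt t (hline t)
    have h2 := h1.clm_apply (hasDerivAt_const t v)
    simp only [map_zero, add_zero] at h2
    have : iteratedFDeriv ℝ 2 f (t • v) ![v, v] = fderiv ℝ (fderiv ℝ f) (t • v) v v := by
      rw [iteratedFDeriv_two_apply]
      simp
    rw [this]
    exact h2

-- two-sided bound
lemma L_bounds {n : ℕ} {L : Euc n → Euc n → ℝ} {C₁ C₂ C₃ : ℝ} (hC₁ : 0 < C₁)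
    (hTon : IsStrictTonelli L C₁ C₂ C₃) (hRev : ∀ x v : Euc n, L x v = L x (-v))
    (x v : Euc n) : L x 0 ≤ L x v ∧ L x v ≤ L x 0 + C₁ / 2 * ‖v‖ ^ 2 := by
  have hLx : ContDiff ℝ 2 (L x) := by
    have : (L x) = (Function.uncurry L) ∘ (fun v : Euc n => (x, v)) := rfl
    rw [this]
    exact hTon.1.comp (contDiff_const.prodMk contDiff_id)
  obtain ⟨hg1, hg2⟩ := line_deriv hLx v
  set g : ℝ → ℝ := fun t => L x (t • v) with hg
  have hdg : deriv g = fun t => fderiv ℝ (L x) (t • v) v :=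
    funext fun t => (hg1 t).deriv
  have hdg2 : ∀ t, deriv^[2] g t = iteratedFDeriv ℝ 2 (L x) (t • v) ![v, v] := by
    intro t
    have : deriv^[2] g = deriv (deriv g) := rfl
    rw [this, hdg]
    exact (hg2 t).deriv
  have hgdiff : Differentiable ℝ g := fun t => (hg1 t).differentiableAt
  have hdgdiff : Differentiable ℝ (deriv g) := by
    rw [hdg]; exact fun t => (hg2 t).differentiableAt
  have hquad : ∀ t : ℝ, (1 / C₁) * ‖v‖ ^ 2 ≤ deriv^[2] g t ∧ deriv^[2] g t ≤ C₁ * ‖v‖ ^ 2 := by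
    intro t; rw [hdg2 t]; exact hTon.2.1 x (t • v) v
  have hgeven : ∀ t : ℝ, g (-t) = g t := by
    intro t
    simp only [hg, neg_smul]
    exact (hRev x (t • v)).symm
  have hg0 : g 0 = L x 0 := by simp [hg]
  have hg1' : g 1 = L x v := by simp [hg]
  constructor
  · -- lower bound: g convex and even
    have hcvx : ConvexOn ℝ Set.univ g := by
      apply convexOn_of_deriv2_nonneg' convex_univ hgdiff.differentiableOn
        hdgdiff.differentiableOn
      intro t _
      have := (hquad t).1
      nlinarith [sq_nonneg ‖v‖, one_div_pos.2 hC₁]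
    have := even_cvx_le hcvx hgeven
    rw [hg0, hg1'] at this; exact this
  · -- upper bound: χ t = C₁/2 ‖v‖² t² - g t convex and even
    set χ : ℝ → ℝ := fun t => C₁ / 2 * ‖v‖ ^ 2 * t ^ 2 - g t with hχ
    have hq : ∀ t : ℝ, HasDerivAt (fun t : ℝ => C₁ / 2 * ‖v‖ ^ 2 * t ^ 2)
        (C₁ * ‖v‖ ^ 2 * t) t := by
      intro t
      have := ((hasDerivAt_pow 2 t).const_mul (C₁ / 2 * ‖v‖ ^ 2))
      refine this.congr_deriv ?_
      rw [show (2:ℕ) - 1 = 1 from rfl]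
      push_cast
      ring
    have hχd : ∀ t, HasDerivAt χ (C₁ * ‖v‖ ^ 2 * t - fderiv ℝ (L x) (t • v) v) t :=
      fun t => (hq t).sub (hg1 t)
    have hχdd : ∀ t, HasDerivAt (deriv χ)
        (C₁ * ‖v‖ ^ 2 - iteratedFDeriv ℝ 2 (L x) (t • v) ![v, v]) t := by
      have hdχ : deriv χ = fun t => C₁ * ‖v‖ ^ 2 * t - fderiv ℝ (L x) (t • v) v :=
        funext fun t => (hχd t).deriv
      intro t
      rw [hdχ]
      have hlin : HasDerivAt (fun t : ℝ => C₁ * ‖v‖ ^ 2 * t) (C₁ * ‖v‖ ^ 2) t := by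
        simpa using (hasDerivAt_id t).const_mul (C₁ * ‖v‖ ^ 2)
      exact hlin.sub (hg2 t)
    have hχdiff : Differentiable ℝ χ := fun t => (hχd t).differentiableAt
    have hχddiff : Differentiable ℝ (deriv χ) := fun t => (hχdd t).differentiableAt
    have hcvx : ConvexOn ℝ Set.univ χ := by
      apply convexOn_of_deriv2_nonneg' convex_univ hχdiff.differentiableOn
        hχddiff.differentiableOn
      intro t _
      have hd2 : deriv^[2] χ t = C₁ * ‖v‖ ^ 2 - iteratedFDeriv ℝ 2 (L x) (t • v) ![v, v] :=
        (hχdd t).deriv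
      rw [hd2]
      have := (hquad t).2
      rw [hdg2 t] at this
      linarith
    have hχeven : ∀ t : ℝ, χ (-t) = χ t := by
      intro t
      show C₁ / 2 * ‖v‖ ^ 2 * (-t) ^ 2 - g (-t) = C₁ / 2 * ‖v‖ ^ 2 * t ^ 2 - g t
      rw [hgeven t]; ring
    have := even_cvx_le hcvx hχeven
    simp only [hχ, hg0, hg1'] at this
    nlinarith [this]

set_option maxHeartbeats 2000000 in
theorem stmt9 (n : ℕ) (hn : 1 ≤ n) (L : Euc n → Euc n → ℝ) (C₁ C₂ C₃ : ℝ)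
    (hC₁ : 0 < C₁) (hC₂ : 0 < C₂) (hC₃ : 0 < C₃)
    (hTon : IsStrictTonelli L C₁ C₂ C₃)
    (hRev : ∀ x v : Euc n, L x v = L x (-v))
    (C_F : ℝ) (hCF : 0 ≤ C_F)
    (K₀ : Set (Euc n)) (hK₀c : IsCompact K₀) (hK₀ne : K₀.Nonempty)
    (R₀ : ℝ) (hR₀ : 0 < R₀) (hK₀R₀ : K₀ ⊆ closedBall 0 R₀)
    (δ₀ : ℝ) (hδ₀ : 0 < δ₀)
    (uf : Euc n → ℝ) (Kf : ℝ≥0) (huf : LipschitzWith Kf uf)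
    (c₀ : ℝ) (hc₀ : 0 ≤ c₀) (hufge : ∀ x, -c₀ ≤ uf x)
    (R : ℝ) (hR : R₀ ≤ R) :
    ∃ M > (0 : ℝ), ∀ T : ℝ, 1 < T → ∀ c : ℝ → Euc n → ℝ,
      ContinuousOn (fun p : ℝ × Euc n => c p.1 p.2) (Set.Icc 0 T ×ˢ Set.univ) →
      (∀ s ∈ Set.Icc (0 : ℝ) T, ∀ x, |c s x| ≤ C_F) →
      (∃ xT : Euc n, WellCondition L c K₀ δ₀ T xT) →
      ∀ xinit ∈ closedBall (0 : Euc n) R, ∀ ξ : ℝ → Euc n,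
        IsMinimizer L c uf 0 T xinit ξ →
        ENNReal.ofReal (T - M)
          ≤ volume {s ∈ Set.Icc (0 : ℝ) T | ξ s ∈ closedBall (0 : Euc n) R} := by
  classical
  set φ := Real.smoothTransition with hφdef
  -- the constant
  set N : ℝ := 2 * (C₃ + C_F) + C₁ / 2 * (Csm * (R + R₀)) ^ 2 + (uf 0 + Kf * R₀) + c₀ with hN
  have hNnn : 0 ≤ N := by
    rw [hN]
    have h0 := hufge 0
    have : (0:ℝ) ≤ Kf * R₀ := mul_nonneg (Kf.coe_nonneg) hR₀.le
    have h1 : (0:ℝ) ≤ C₁ / 2 * (Csm * (R + R₀)) ^ 2 :=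
      mul_nonneg (by linarith) (sq_nonneg _)
    nlinarith [hC₃.le, hCF]
  refine ⟨N / δ₀ + 1, by positivity, ?_⟩
  intro T hT c hccont hcbd hwell xinit hxinit ξ hmin
  obtain ⟨xT, hxT0, hwell2⟩ := hwell
  have hT0 : (0:ℝ) ≤ T := by linarith
  have hT1 : (1:ℝ) ≤ T := hT.le
  obtain ⟨⟨K, hK⟩, hξ0, hminle⟩ := hmin
  have hξcont : Continuous ξ := hK.continuous
  have hLlow : ∀ x v : Euc n, L x 0 ≤ L x v := fun x v => (L_bounds hC₁ hTon hRev x v).1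
  have hLup : ∀ x v : Euc n, L x v ≤ L x 0 + C₁ / 2 * ‖v‖ ^ 2 :=
    fun x v => (L_bounds hC₁ hTon hRev x v).2
  have hL0 : ∀ x : Euc n, |L x 0| ≤ C₃ := by
    intro x
    have := hTon.2.2.2 x
    have h1 := norm_nonneg (fderiv ℝ (fun y => L y 0) x)
    have h2 := norm_nonneg (fderiv ℝ (L x) 0)
    linarith
  -- the excursion set
  set A : Set ℝ := {s ∈ Icc (0:ℝ) T | ξ s ∉ K₀} with hA
  have hAmeas : MeasurableSet A := by
    have : A = Icc (0:ℝ) T ∩ ξ ⁻¹' K₀ᶜ := rfl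
    rw [this]
    exact measurableSet_Icc.inter (hK₀c.isClosed.measurableSet.compl.preimage hξcont.measurable)
  have hAfin : volume A ≠ ⊤ := by
    refine ne_top_of_le_ne_top ?_ (measure_mono (fun s hs => hs.1))
    simp [Real.volume_Icc]
  set r : ℝ := (volume A).toReal with hr
  have hrnn : 0 ≤ r := ENNReal.toReal_nonneg
  -- the baseline
  set m : ℝ → ℝ := fun s => L xT 0 + c s xT with hm
  have hmcont : ContinuousOn m (Icc 0 T) := by
    apply continuousOn_const.add
    have : ContinuousOn (fun s : ℝ => (s, xT)) (Icc 0 T) :=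
      continuousOn_id.prodMk continuousOn_const
    exact hccont.comp this (fun s hs => ⟨hs, mem_univ _⟩)
  have hmbd : ∀ s ∈ Icc (0:ℝ) T, |m s| ≤ C₃ + C_F := by
    intro s hs
    have h1 := hL0 xT
    have h2 := hcbd s hs xT
    calc |m s| ≤ |L xT 0| + |c s xT| := abs_add_le _ _
    _ ≤ C₃ + C_F := by linarith
  -- bound on deriv ξ
  have hdξ : ∀ s, ‖deriv ξ s‖ ≤ K := by
    intro s
    by_cases h : DifferentiableAt ℝ ξ s
    · have h1 : ‖fderiv ℝ ξ s‖ ≤ K := h.hasFDerivAt.le_of_lipschitz hK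
      calc ‖deriv ξ s‖ = ‖fderiv ℝ ξ s 1‖ := by rw [fderiv_apply_one_eq_deriv]
      _ ≤ ‖fderiv ℝ ξ s‖ * ‖(1:ℝ)‖ := (fderiv ℝ ξ s).le_opNorm 1
      _ ≤ K := by simpa using h1
    · rw [deriv_zero_of_not_differentiableAt h]
      simpa using K.coe_nonneg
  -- integrands
  set Iξ : ℝ → ℝ := fun s => L (ξ s) (deriv ξ s) + c s (ξ s) with hIξ
  have hIξmeas : Measurable (fun s => L (ξ s) (deriv ξ s)) := by
    have : (fun s => L (ξ s) (deriv ξ s))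
        = (Function.uncurry L) ∘ (fun s => (ξ s, deriv ξ s)) := rfl
    rw [this]
    exact hTon.1.continuous.measurable.comp (hξcont.measurable.prodMk (measurable_deriv ξ))
  have hcξcont : ContinuousOn (fun s => c s (ξ s)) (Icc 0 T) := by
    have : ContinuousOn (fun s : ℝ => (s, ξ s)) (Icc 0 T) :=
      continuousOn_id.prodMk hξcont.continuousOn
    exact hccont.comp this (fun s hs => ⟨hs, mem_univ _⟩)
  have hIξint : IntegrableOn Iξ (Icc 0 T) volume := by
    apply Integrable.add
    · apply Integrable.mono' (g := fun _ => C₃ + C₁ / 2 * K ^ 2)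
      · rw [integrable_const_iff]
        right
        infer_instance
      · exact hIξmeas.aestronglyMeasurable.restrict
      · apply Filter.Eventually.of_forall
        intro s
        have h1 := hLlow (ξ s) (deriv ξ s)
        have h2 := hLup (ξ s) (deriv ξ s)
        have h3 := hL0 (ξ s)
        have h4 : ‖deriv ξ s‖ ^ 2 ≤ (K:ℝ) ^ 2 :=
          pow_le_pow_left₀ (norm_nonneg _) (hdξ s) 2
        rw [Real.norm_eq_abs, abs_le]
        constructor
        · have := abs_le.1 h3
          nlinarith [sq_nonneg (K:ℝ)]
        · have := abs_le.1 h3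
          nlinarith
    · exact hcξcont.integrableOn_Icc
  have hIξint' : IntervalIntegrable Iξ volume 0 T := by
    rw [intervalIntegrable_iff, uIoc_of_le hT0]
    exact hIξint.mono_set Ioc_subset_Icc_self
  have hmint : ∀ a b : ℝ, a ∈ Icc (0:ℝ) T → b ∈ Icc (0:ℝ) T →
      IntervalIntegrable m volume a b := by
    intro a b ha hb
    apply ContinuousOn.intervalIntegrable
    apply hmcont.mono
    intro s hs
    rcases le_total a b with h | h
    · rw [uIcc_of_le h] at hs; exact ⟨le_trans ha.1 hs.1, le_trans hs.2 hb.2⟩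
    · rw [uIcc_of_ge h] at hs; exact ⟨le_trans hb.1 hs.1, le_trans hs.2 ha.2⟩
  -- indicator
  set ind : ℝ → ℝ := A.indicator (fun _ => δ₀) with hind
  have hindint : IntervalIntegrable ind volume 0 T := by
    rw [intervalIntegrable_iff, uIoc_of_le hT0]
    apply Integrable.indicator _ hAmeas
    rw [integrable_const_iff]
    right
    infer_instance
  -- lower bound for Iξ
  have hlow : ∀ s ∈ Icc (0:ℝ) T, m s + ind s ≤ Iξ s := by
    intro s hs
    have hbase := hLlow (ξ s) (deriv ξ s)
    by_cases hsk : ξ s ∈ K₀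
    · have h1 := (hwell2 s hs).1 (ξ s) hsk
      have h2 : ind s = 0 := by
        apply indicator_of_notMem
        intro hsA
        exact hsA.2 hsk
      rw [h2]
      show L xT 0 + c s xT + 0 ≤ L (ξ s) (deriv ξ s) + c s (ξ s)
      linarith
    · have h1 := (hwell2 s hs).2 (ξ s) hsk
      have hsA : s ∈ A := by
        rw [hA]; exact ⟨hs, hsk⟩
      have h2 : ind s = δ₀ := indicator_of_mem hsA _
      rw [h2]
      show L xT 0 + c s xT + δ₀ ≤ L (ξ s) (deriv ξ s) + c s (ξ s)
      linarith
  -- value of the indicator integral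
  have hindval : ∫ s in (0:ℝ)..T, ind s = δ₀ * r := by
    rw [intervalIntegral.integral_of_le hT0]
    rw [MeasureTheory.integral_indicator hAmeas]
    rw [Measure.restrict_restrict hAmeas, setIntegral_const]
    have : volume (A ∩ Ioc 0 T) = volume A := by
      apply le_antisymm (measure_mono inter_subset_left)
      have hsub : A ⊆ (A ∩ Ioc 0 T) ∪ {0} := by
        intro s hsA
        rcases eq_or_lt_of_le hsA.1.1 with h | h
        · right; simp [← h]
        · left; exact ⟨hsA, h, hsA.1.2⟩
      calc volume A ≤ volume ((A ∩ Ioc 0 T) ∪ {0}) := measure_mono hsub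
      _ ≤ volume (A ∩ Ioc 0 T) + volume ({0} : Set ℝ) := measure_union_le _ _
      _ = volume (A ∩ Ioc 0 T) := by simp
    rw [measureReal_def, this, hr]
    rw [smul_eq_mul, mul_comm]
  -- lower bound for action of ξ
  have hactlow : (∫ s in (0:ℝ)..T, m s) + δ₀ * r + uf (ξ T) ≤ action L c uf 0 T ξ := by
    have h1 : ∫ s in (0:ℝ)..T, (m s + ind s) ≤ ∫ s in (0:ℝ)..T, Iξ s := by
      apply intervalIntegral.integral_mono_on hT0 _ hIξint' hlow
      exact (hmint 0 T (by constructor <;> linarith) (by constructor <;> linarith)).add hindint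
    rw [intervalIntegral.integral_add (hmint 0 T (by constructor <;> linarith)
      (by constructor <;> linarith)) hindint, hindval] at h1
    have : action L c uf 0 T ξ = (∫ s in (0:ℝ)..T, Iξ s) + uf (ξ T) := rfl
    rw [this]
    linarith
    -- the comparison curve
  set w : Euc n := xT - xinit with hwdef
  have hwnorm : ‖w‖ ≤ R + R₀ := by
    have h1 : ‖xT‖ ≤ R₀ := by
      have := hK₀R₀ hxT0
      simpa [mem_closedBall, dist_eq_norm] using this
    have h2 : ‖xinit‖ ≤ R := by simpa [mem_closedBall, dist_eq_norm] using hxinit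
    calc ‖w‖ ≤ ‖xT‖ + ‖xinit‖ := norm_sub_le _ _
    _ ≤ R + R₀ := by linarith
  set η : ℝ → Euc n := fun s => xinit + φ s • w with hηdef
  have hφdiff : Differentiable ℝ φ :=
    (Real.smoothTransition.contDiff (n := 1)).differentiable (by norm_num)
  have hηd : ∀ s, HasDerivAt η (deriv φ s • w) s := by
    intro s
    exact (((hφdiff s).hasDerivAt).smul_const w).const_add xinit
  have hηderiv : deriv η = fun s => deriv φ s • w := funext fun s => (hηd s).deriv
  have hηlip : ∃ K : ℝ≥0, LipschitzWith K η := by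
    refine ⟨‖Csm * ‖w‖‖₊,
      lipschitzWith_of_nnnorm_deriv_le (fun s => (hηd s).differentiableAt) ?_⟩
    intro s
    rw [← NNReal.coe_le_coe, coe_nnnorm, coe_nnnorm, hηderiv]
    calc ‖deriv φ s • w‖ = |deriv φ s| * ‖w‖ := by rw [norm_smul, Real.norm_eq_abs]
    _ ≤ Csm * ‖w‖ := mul_le_mul_of_nonneg_right (st_deriv_le' s) (norm_nonneg _)
    _ ≤ ‖Csm * ‖w‖‖ := le_abs_self _
  have hη0 : η 0 = xinit := by
    simp [hηdef, hφdef, Real.smoothTransition.zero]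
  have hηT : ∀ s : ℝ, 1 ≤ s → η s = xT := by
    intro s hs
    simp only [hηdef, hφdef, Real.smoothTransition.one_of_one_le hs, one_smul, hwdef]
    abel
  have hηd0 : ∀ s : ℝ, 1 ≤ s → deriv η s = 0 := by
    intro s hs
    rw [hηderiv]
    simp only [hφdef, st_deriv_zero_of_one_le s hs, zero_smul]
  -- integrand of η
  set ηI : ℝ → ℝ := fun s => L (η s) (deriv η s) + c s (η s) with hηI
  have hηcont : Continuous η := by
    apply continuous_const.add
    exact (Real.smoothTransition.continuous.smul continuous_const)
  have hηIcont : ContinuousOn ηI (Icc 0 T) := by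
    apply ContinuousOn.add
    · apply Continuous.continuousOn
      have h1 : Continuous (deriv η) := by
        rw [hηderiv]
        exact contDeriv_st.smul continuous_const
      have : (fun s => L (η s) (deriv η s))
          = (Function.uncurry L) ∘ (fun s => (η s, deriv η s)) := rfl
      rw [this]
      exact hTon.1.continuous.comp (hηcont.prodMk h1)
    · have : ContinuousOn (fun s : ℝ => (s, η s)) (Icc 0 T) :=
        continuousOn_id.prodMk hηcont.continuousOn
      exact hccont.comp this (fun s hs => ⟨hs, mem_univ _⟩)
  have hηIint01 : IntervalIntegrable ηI volume 0 1 := by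
    apply ContinuousOn.intervalIntegrable
    apply hηIcont.mono
    rw [uIcc_of_le (by norm_num : (0:ℝ) ≤ 1)]
    exact Icc_subset_Icc le_rfl hT1
  have hηIint1T : IntervalIntegrable ηI volume 1 T := by
    apply ContinuousOn.intervalIntegrable
    apply hηIcont.mono
    rw [uIcc_of_le hT1]
    exact Icc_subset_Icc (by norm_num) le_rfl
  -- on [1,T] the integrand of η equals the baseline
  have hηIm : ∫ s in (1:ℝ)..T, ηI s = ∫ s in (1:ℝ)..T, m s := by
    apply intervalIntegral.integral_congr
    intro s hs
    rw [uIcc_of_le hT1] at hs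
    simp only [hηI, hm, hηT s hs.1, hηd0 s hs.1]
  -- bound on [0,1]
  set q : ℝ := C₁ / 2 * (Csm * (R + R₀)) ^ 2 with hq
  have h01bd : ∫ s in (0:ℝ)..1, ηI s ≤ C₃ + q + C_F := by
    have hmono : ∀ s ∈ Icc (0:ℝ) 1, ηI s ≤ C₃ + q + C_F := by
      intro s hs
      have h1 : ‖deriv η s‖ ≤ Csm * (R + R₀) := by
        rw [hηderiv]
        calc ‖deriv φ s • w‖ = |deriv φ s| * ‖w‖ := by rw [norm_smul, Real.norm_eq_abs]
        _ ≤ Csm * (R + R₀) :=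
          mul_le_mul (st_deriv_le' s) hwnorm (norm_nonneg _) Csm_nonneg
      have h2 : ‖deriv η s‖ ^ 2 ≤ (Csm * (R + R₀)) ^ 2 :=
        pow_le_pow_left₀ (norm_nonneg _) h1 2
      have h3 := hLup (η s) (deriv η s)
      have h4 := (abs_le.1 (hL0 (η s))).2
      have h5 := (abs_le.1 (hcbd s ⟨hs.1, le_trans hs.2 hT1⟩ (η s))).2
      have h6 : C₁ / 2 * ‖deriv η s‖ ^ 2 ≤ q := by
        rw [hq]
        apply mul_le_mul_of_nonneg_left h2 (by linarith)
      simp only [hηI]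
      linarith
    have hstep : ∫ s in (0:ℝ)..1, ηI s ≤ ∫ s in (0:ℝ)..1, (C₃ + q + C_F) :=
      intervalIntegral.integral_mono_on (by norm_num) hηIint01
        intervalIntegrable_const hmono
    have hconst : ∫ s in (0:ℝ)..1, (C₃ + q + C_F) = C₃ + q + C_F := by simp
    linarith
  -- action of η
  have hactη : action L c uf 0 T η
      = (∫ s in (0:ℝ)..1, ηI s) + (∫ s in (1:ℝ)..T, m s) + uf xT := by
    have hsplit : (∫ s in (0:ℝ)..1, ηI s) + (∫ s in (1:ℝ)..T, ηI s)
        = ∫ s in (0:ℝ)..T, ηI s :=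
      intervalIntegral.integral_add_adjacent_intervals hηIint01 hηIint1T
    have : action L c uf 0 T η = (∫ s in (0:ℝ)..T, ηI s) + uf (η T) := rfl
    rw [this, hηT T hT1, ← hsplit, hηIm]
  -- baseline split and bound on [0,1]
  have hmsplit : (∫ s in (0:ℝ)..1, m s) + (∫ s in (1:ℝ)..T, m s)
      = ∫ s in (0:ℝ)..T, m s :=
    intervalIntegral.integral_add_adjacent_intervals
      (hmint 0 1 (by constructor <;> linarith) (by constructor <;> linarith))
      (hmint 1 T (by constructor <;> linarith) (by constructor <;> linarith))
  have hm01 : -(C₃ + C_F) ≤ ∫ s in (0:ℝ)..1, m s := by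
    have hstep : ∫ _ in (0:ℝ)..1, -(C₃ + C_F) ≤ ∫ s in (0:ℝ)..1, m s := by
      apply intervalIntegral.integral_mono_on (by norm_num) intervalIntegrable_const
        (hmint 0 1 (by constructor <;> linarith) (by constructor <;> linarith))
      intro s hs
      exact (abs_le.1 (hmbd s ⟨hs.1, le_trans hs.2 hT1⟩)).1
    have hconst : ∫ _ in (0:ℝ)..1, -(C₃ + C_F) = -(C₃ + C_F) := by simp
    linarith
  -- Lipschitz bound on uf xT
  have hufxT : uf xT ≤ uf 0 + Kf * R₀ := by
    have h1 : dist (uf xT) (uf 0) ≤ Kf * dist xT 0 := huf.dist_le_mul xT 0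
    have h2 : dist xT 0 ≤ R₀ := by
      have := hK₀R₀ hxT0
      simpa [mem_closedBall] using this
    have h3 : uf xT - uf 0 ≤ dist (uf xT) (uf 0) := by
      rw [Real.dist_eq]; exact le_abs_self _
    have h4 : (Kf : ℝ) * dist xT 0 ≤ Kf * R₀ :=
      mul_le_mul_of_nonneg_left h2 Kf.coe_nonneg
    linarith
  -- combine
  have hcomp := hminle η hηlip hη0
  have hufξT := hufge (ξ T)
  have hkey : δ₀ * r ≤ N := by
    have h1 := hactlow
    rw [hactη] at hcomp
    have h2 : (∫ s in (1:ℝ)..T, m s) = (∫ s in (0:ℝ)..T, m s) - ∫ s in (0:ℝ)..1, m s := by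
      linarith [hmsplit]
    rw [h2] at hcomp
    rw [hN]
    linarith [h01bd, hm01, hufxT, hufξT, hq]
  have hrle : r ≤ N / δ₀ := by
    rw [le_div_iff₀ hδ₀]
    linarith [hkey]
  -- conclusion
  have hvolA : volume A ≤ ENNReal.ofReal (N / δ₀) := by
    have : volume A = ENNReal.ofReal r := (ENNReal.ofReal_toReal hAfin).symm
    rw [this]
    exact ENNReal.ofReal_le_ofReal hrle
  set S : Set ℝ := {s ∈ Icc (0:ℝ) T | ξ s ∈ closedBall (0 : Euc n) R} with hS
  have hcover : Icc (0:ℝ) T ⊆ S ∪ A := by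
    intro s hs
    by_cases h : ξ s ∈ K₀
    · left
      exact ⟨hs, closedBall_subset_closedBall hR (hK₀R₀ h)⟩
    · right
      rw [hA]
      exact ⟨hs, h⟩
  have hTvol : ENNReal.ofReal T ≤ volume S + volume A := by
    calc ENNReal.ofReal T = volume (Icc (0:ℝ) T) := by simp [Real.volume_Icc]
    _ ≤ volume (S ∪ A) := measure_mono hcover
    _ ≤ volume S + volume A := measure_union_le _ _
  have hMnn : (0:ℝ) ≤ N / δ₀ + 1 := by positivity
  rw [ENNReal.ofReal_sub _ hMnn]
  rw [tsub_le_iff_right]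
  calc ENNReal.ofReal T ≤ volume S + volume A := hTvol
  _ ≤ volume S + ENNReal.ofReal (N / δ₀ + 1) := by
    apply add_le_add_right
    exact le_trans hvolA (ENNReal.ofReal_le_ofReal (by linarith))
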